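/- For every ℓ ∈ (0, π): 3·sin²(ℓ)·cos(ℓ)/tan²(ℓ/2) + 6·sin³(ℓ)/tan(ℓ/2) + 9·(2/3 − (1/3)·sin²(ℓ)·cos(ℓ) − (2/3)·cos(ℓ)) = 12. -/

import Mathlib

open Real

/-- Consistency identity for the dual variables in the case `κ = +1`, `n = 4`. -/
theorem sph_consistency (ℓ : ℝ) (hℓ : ℓ ∈ Set.Ioo 0 π) :
    3 * (sin ℓ) ^ 2 * cos ℓ / (tan (ℓ / 2)) ^ 2 + 6 * (sin ℓ) ^ 3 / tan (ℓ / 2)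
      + 9 * (2 / 3 - (1 / 3) * (sin ℓ) ^ 2 * cos ℓ - (2 / 3) * cos ℓ) = 12 := by
  obtain ⟨h0, hπ⟩ := hℓ
  have hs : sin (ℓ / 2) ≠ 0 := by
    apply ne_of_gt
    apply Real.sin_pos_of_pos_of_lt_pi <;> linarith [Real.pi_pos]
  have hc : cos (ℓ / 2) ≠ 0 := by
    apply ne_of_gt
    apply Real.cos_pos_of_mem_Ioo
    constructor <;> [linarith [Real.pi_pos]; linarith]
  have h2 : ℓ = 2 * (ℓ / 2) := by ring
  have hpy : sin (ℓ / 2) ^ 2 + cos (ℓ / 2) ^ 2 = 1 := Real.sin_sq_add_cos_sq _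
  rw [h2, Real.sin_two_mul, Real.cos_two_mul, Real.tan_eq_sin_div_cos]
  field_simp
  linear_combination (72 * cos (ℓ/2) ^ 4 + 36 * cos (ℓ/2) ^ 2) * hpy
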